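/- Let (Wₙ, Vₙ) be the pair polarization process: W₀ = W, V₀ = V, and at each step the same sign (+ or −, each with probability 1/2, independently) is applied to both channels. Then the process Iₙ := I(Wₙ, Vₙ) is a martingale with respect to the natural filtration, provided I(W^s, V^s) > −∞ for all sign sequences s. -/

import Mathlib

open Finset Real

noncomputable section

/-- Binary symmetric channel with crossover probability `α`: `BSC α x y = W(y|x)`. -/
def BSC (α : ℝ) : Bool → Bool → ℝ := fun x y => if y = x then 1 - α else α

/-- Arıkan's minus polar transform. -/
def Wminus {Y : Type*} (W : Bool → Y → ℝ) : Bool → Y × Y → ℝ :=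
  fun u₁ y => ∑ u₂ : Bool, (1/2) * W (u₁ ^^ u₂) y.1 * W u₂ y.2

/-- Arıkan's plus polar transform; output `(y₁, y₂, u₁)`. -/
def Wplus {Y : Type*} (W : Bool → Y → ℝ) : Bool → Y × Y × Bool → ℝ :=
  fun u₂ y => (1/2) * W (y.2.2 ^^ u₂) y.1 * W u₂ y.2.1

/-- Mismatched information functional `I(W, V)`. -/
def Ifun {Y : Type*} [Fintype Y] (W V : Bool → Y → ℝ) : ℝ :=
  ∑ y : Y, ∑ x : Bool, (1/2) * W x y *
    Real.logb 2 (V x y / ((1/2) * V false y + (1/2) * V true y))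

/-- Output alphabet after applying a sequence of polar transforms
(`true` = plus, `false` = minus, head applied first). -/
def polarType (Y : Type u) : List Bool → Type u
  | [] => Y
  | true :: s => polarType (Y × Y × Bool) s
  | false :: s => polarType (Y × Y) s

/-- The synthesized channel `W^s`. -/
def polarChan {Y : Type*} (W : Bool → Y → ℝ) : (s : List Bool) → Bool → polarType Y s → ℝ
  | [] => W
  | true :: s => polarChan (Wplus W) s
  | false :: s => polarChan (Wminus W) s

instance polarFintype (Y : Type*) [Fintype Y] : ∀ s : List Bool, Fintype (polarType Y s)
  | [] => inferInstanceAs (Fintype Y)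
  | true :: s => polarFintype (Y × Y × Bool) s
  | false :: s => polarFintype (Y × Y) s


/-! ### Auxiliary lemmas -/

section AuxAnalytic
variable {Y : Type*} [Fintype Y]

lemma aux_claimC (W V : Bool → Y → ℝ)
    (hW0 : ∀ x y, 0 ≤ W x y) (hV0 : ∀ x y, 0 ≤ V x y)
    (hpos : ∀ x y, 0 < W x y → 0 < V x y) (y₁ y₂ : Y) (u₁ u₂ : Bool) :
    (1/4) * W (u₁ ^^ u₂) y₁ * W u₂ y₂ *
      (Real.logb 2 (Wminus V u₁ (y₁,y₂) /
          (((1/2) * V false y₁ + (1/2) * V true y₁) * ((1/2) * V false y₂ + (1/2) * V true y₂))) +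
       Real.logb 2 ((1/2) * V (u₁ ^^ u₂) y₁ * V u₂ y₂ / ((1/2) * Wminus V u₁ (y₁,y₂))))
    = (1/4) * W (u₁ ^^ u₂) y₁ * W u₂ y₂ *
      (Real.logb 2 (V (u₁ ^^ u₂) y₁ / ((1/2) * V false y₁ + (1/2) * V true y₁)) +
       Real.logb 2 (V u₂ y₂ / ((1/2) * V false y₂ + (1/2) * V true y₂))) := by
  rcases eq_or_lt_of_le (hW0 (u₁ ^^ u₂) y₁) with h1 | h1
  · rw [← h1]; ring
  rcases eq_or_lt_of_le (hW0 u₂ y₂) with h2 | h2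
  · rw [← h2]; ring
  have hVa : 0 < V (u₁ ^^ u₂) y₁ := hpos _ _ h1
  have hVb : 0 < V u₂ y₂ := hpos _ _ h2
  have hq1 : 0 < (1/2) * V false y₁ + (1/2) * V true y₁ := by
    cases hx : u₁ ^^ u₂ <;> rw [hx] at hVa <;> nlinarith [hV0 false y₁, hV0 true y₁]
  have hq2 : 0 < (1/2) * V false y₂ + (1/2) * V true y₂ := by
    cases hx : u₂ <;> rw [hx] at hVb <;> nlinarith [hV0 false y₂, hV0 true y₂]
  have hVm : 0 < Wminus V u₁ (y₁,y₂) := by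
    have hle : (1/2) * V (u₁ ^^ u₂) y₁ * V u₂ y₂ ≤ Wminus V u₁ (y₁,y₂) := by
      rw [Wminus]
      exact Finset.single_le_sum
        (f := fun b => (1/2) * V (Bool.xor u₁ b) (y₁,y₂).1 * V b (y₁,y₂).2)
        (fun b _ => mul_nonneg (mul_nonneg (by norm_num) (hV0 _ _)) (hV0 _ _)) (mem_univ u₂)
    calc (0:ℝ) < (1/2) * V (u₁ ^^ u₂) y₁ * V u₂ y₂ := by positivity
    _ ≤ _ := hle
  congr 1
  rw [Real.logb_div (ne_of_gt hVm) (by positivity),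
      Real.logb_div (by positivity) (by positivity),
      Real.logb_div (ne_of_gt hVa) (ne_of_gt hq1),
      Real.logb_div (ne_of_gt hVb) (ne_of_gt hq2),
      Real.logb_mul (ne_of_gt hq1) (ne_of_gt hq2),
      Real.logb_mul (by positivity : ((1:ℝ)/2) * V (u₁ ^^ u₂) y₁ ≠ 0) (ne_of_gt hVb),
      Real.logb_mul (by norm_num : ((1:ℝ)/2) ≠ 0) (ne_of_gt hVa),
      Real.logb_mul (by norm_num : ((1:ℝ)/2) ≠ 0) (ne_of_gt hVm)]
  ring

lemma aux_prod_sum (f g : Bool → Y → ℝ) :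
    ∑ y₁ : Y, ∑ y₂ : Y, ∑ x₁ : Bool, ∑ x₂ : Bool, f x₁ y₁ * g x₂ y₂
    = (∑ y : Y, ∑ x : Bool, f x y) * (∑ y : Y, ∑ x : Bool, g x y) := by
  rw [Finset.sum_mul_sum]
  exact Finset.sum_congr rfl fun y₁ _ => Finset.sum_congr rfl fun y₂ _ => by
    rw [Finset.sum_mul_sum]

lemma Ifun_step (W V : Bool → Y → ℝ)
    (hW0 : ∀ x y, 0 ≤ W x y) (hW1 : ∀ x, ∑ y, W x y = 1)
    (hV0 : ∀ x y, 0 ≤ V x y)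
    (hpos : ∀ x y, 0 < W x y → 0 < V x y) :
    Ifun (Wminus W) (Wminus V) + Ifun (Wplus W) (Wplus V) = 2 * Ifun W V := by
  have hqm : ∀ y₁ y₂ : Y, (1/2) * Wminus V false (y₁,y₂) + (1/2) * Wminus V true (y₁,y₂)
      = ((1/2) * V false y₁ + (1/2) * V true y₁) * ((1/2) * V false y₂ + (1/2) * V true y₂) := by
    intro y₁ y₂
    simp [Wminus, Fintype.sum_bool]
    ring
  have hqp : ∀ (y₁ y₂ : Y) (u₁ : Bool),
      (1/2) * Wplus V false (y₁,y₂,u₁) + (1/2) * Wplus V true (y₁,y₂,u₁)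
      = (1/2) * Wminus V u₁ (y₁,y₂) := by
    intro y₁ y₂ u₁
    simp [Wminus, Wplus, Fintype.sum_bool]
    ring
  have hA : Ifun (Wminus W) (Wminus V) = ∑ y₁ : Y, ∑ y₂ : Y, ∑ u₁ : Bool, ∑ u₂ : Bool,
      (1/4) * W (u₁ ^^ u₂) y₁ * W u₂ y₂ *
        Real.logb 2 (Wminus V u₁ (y₁,y₂) /
          (((1/2) * V false y₁ + (1/2) * V true y₁) * ((1/2) * V false y₂ + (1/2) * V true y₂))) := by
    rw [Ifun, Fintype.sum_prod_type]
    refine Finset.sum_congr rfl fun y₁ _ => Finset.sum_congr rfl fun y₂ _ =>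
      Finset.sum_congr rfl fun u₁ _ => ?_
    rw [hqm y₁ y₂]
    show (1/2) * (∑ u₂ : Bool, (1/2) * W (u₁ ^^ u₂) y₁ * W u₂ y₂) * _ = _
    rw [Finset.mul_sum, Finset.sum_mul]
    exact Finset.sum_congr rfl fun u₂ _ => by ring
  have hB : Ifun (Wplus W) (Wplus V) = ∑ y₁ : Y, ∑ y₂ : Y, ∑ u₁ : Bool, ∑ u₂ : Bool,
      (1/4) * W (u₁ ^^ u₂) y₁ * W u₂ y₂ *
        Real.logb 2 ((1/2) * V (u₁ ^^ u₂) y₁ * V u₂ y₂ / ((1/2) * Wminus V u₁ (y₁,y₂))) := by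
    rw [Ifun, Fintype.sum_prod_type]
    refine Finset.sum_congr rfl fun y₁ _ => ?_
    rw [Fintype.sum_prod_type]
    refine Finset.sum_congr rfl fun y₂ _ => Finset.sum_congr rfl fun u₁ _ =>
      Finset.sum_congr rfl fun u₂ _ => ?_
    rw [hqp y₁ y₂ u₁]
    show (1/2) * ((1/2) * W (u₁ ^^ u₂) y₁ * W u₂ y₂) *
        Real.logb 2 ((1/2) * V (u₁ ^^ u₂) y₁ * V u₂ y₂ / ((1/2) * Wminus V u₁ (y₁,y₂))) = _
    ring
  rw [hA, hB, ← Finset.sum_add_distrib]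
  simp only [← Finset.sum_add_distrib]
  have hC : ∀ (y₁ y₂ : Y) (u₁ u₂ : Bool),
      (1/4) * W (u₁ ^^ u₂) y₁ * W u₂ y₂ *
        Real.logb 2 (Wminus V u₁ (y₁,y₂) /
          (((1/2) * V false y₁ + (1/2) * V true y₁) * ((1/2) * V false y₂ + (1/2) * V true y₂)))
      + (1/4) * W (u₁ ^^ u₂) y₁ * W u₂ y₂ *
        Real.logb 2 ((1/2) * V (u₁ ^^ u₂) y₁ * V u₂ y₂ / ((1/2) * Wminus V u₁ (y₁,y₂)))
      = (1/4) * W (u₁ ^^ u₂) y₁ * W u₂ y₂ *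
        (Real.logb 2 (V (u₁ ^^ u₂) y₁ / ((1/2) * V false y₁ + (1/2) * V true y₁)) +
         Real.logb 2 (V u₂ y₂ / ((1/2) * V false y₂ + (1/2) * V true y₂))) := by
    intro y₁ y₂ u₁ u₂
    rw [← aux_claimC W V hW0 hV0 hpos y₁ y₂ u₁ u₂]
    ring
  calc
    ∑ y₁ : Y, ∑ y₂ : Y, ∑ u₁ : Bool, ∑ u₂ : Bool,
      ((1/4) * W (u₁ ^^ u₂) y₁ * W u₂ y₂ *
        Real.logb 2 (Wminus V u₁ (y₁,y₂) /
          (((1/2) * V false y₁ + (1/2) * V true y₁) * ((1/2) * V false y₂ + (1/2) * V true y₂)))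
      + (1/4) * W (u₁ ^^ u₂) y₁ * W u₂ y₂ *
        Real.logb 2 ((1/2) * V (u₁ ^^ u₂) y₁ * V u₂ y₂ / ((1/2) * Wminus V u₁ (y₁,y₂))))
      = ∑ y₁ : Y, ∑ y₂ : Y, ∑ u₁ : Bool, ∑ u₂ : Bool,
        (1/4) * W (u₁ ^^ u₂) y₁ * W u₂ y₂ *
        (Real.logb 2 (V (u₁ ^^ u₂) y₁ / ((1/2) * V false y₁ + (1/2) * V true y₁)) +
         Real.logb 2 (V u₂ y₂ / ((1/2) * V false y₂ + (1/2) * V true y₂))) := by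
        exact Finset.sum_congr rfl fun y₁ _ => Finset.sum_congr rfl fun y₂ _ =>
          Finset.sum_congr rfl fun u₁ _ => Finset.sum_congr rfl fun u₂ _ => hC y₁ y₂ u₁ u₂
    _ = ∑ y₁ : Y, ∑ y₂ : Y, ∑ x₁ : Bool, ∑ x₂ : Bool,
        (1/4) * W x₁ y₁ * W x₂ y₂ *
        (Real.logb 2 (V x₁ y₁ / ((1/2) * V false y₁ + (1/2) * V true y₁)) +
         Real.logb 2 (V x₂ y₂ / ((1/2) * V false y₂ + (1/2) * V true y₂))) := by
        refine Finset.sum_congr rfl fun y₁ _ => Finset.sum_congr rfl fun y₂ _ => ?_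
        simp only [Fintype.sum_bool, Bool.true_xor, Bool.false_xor, Bool.not_true, Bool.not_false]
        ring
    _ = 2 * Ifun W V := by
        have expand : ∀ (y₁ y₂ : Y) (x₁ x₂ : Bool),
          (1/4) * W x₁ y₁ * W x₂ y₂ *
          (Real.logb 2 (V x₁ y₁ / ((1/2) * V false y₁ + (1/2) * V true y₁)) +
           Real.logb 2 (V x₂ y₂ / ((1/2) * V false y₂ + (1/2) * V true y₂)))
          = ((1/4) * (W x₁ y₁ * Real.logb 2 (V x₁ y₁ / ((1/2) * V false y₁ + (1/2) * V true y₁)))) * W x₂ y₂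
            + W x₁ y₁ * ((1/4) * (W x₂ y₂ * Real.logb 2 (V x₂ y₂ / ((1/2) * V false y₂ + (1/2) * V true y₂)))) := by
          intro y₁ y₂ x₁ x₂; ring
        simp only [expand, Finset.sum_add_distrib]
        rw [aux_prod_sum (fun x y => (1/4) * (W x y * Real.logb 2 (V x y / ((1/2) * V false y + (1/2) * V true y)))) (fun x y => W x y),
            aux_prod_sum (fun x y => W x y) (fun x y => (1/4) * (W x y * Real.logb 2 (V x y / ((1/2) * V false y + (1/2) * V true y))))]
        have h2 : (∑ y : Y, ∑ x : Bool, W x y) = 2 := by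
          rw [Finset.sum_comm]
          simp [hW1, Fintype.sum_bool]
        rw [h2, Ifun]
        rw [show (∑ y : Y, ∑ x : Bool, (1/4) * (W x y * Real.logb 2 (V x y / ((1/2) * V false y + (1/2) * V true y))))
            = (1/2) * ∑ y : Y, ∑ x : Bool, (1/2) * W x y * Real.logb 2 (V x y / ((1/2) * V false y + (1/2) * V true y)) from by
          rw [Finset.mul_sum]
          exact Finset.sum_congr rfl fun y _ => by rw [Finset.mul_sum]; exact Finset.sum_congr rfl fun x _ => by ring]
        ring

end AuxAnalytic

section AuxChan
universe u

lemma Wminus_nonneg {Y : Type u} (W : Bool → Y → ℝ) (hW : ∀ x y, 0 ≤ W x y) :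
    ∀ x y, 0 ≤ Wminus W x y := fun x y =>
  Finset.sum_nonneg fun b _ => mul_nonneg (mul_nonneg (by norm_num) (hW _ _)) (hW _ _)

lemma Wplus_nonneg {Y : Type u} (W : Bool → Y → ℝ) (hW : ∀ x y, 0 ≤ W x y) :
    ∀ x y, 0 ≤ Wplus W x y := fun x y =>
  mul_nonneg (mul_nonneg (by norm_num) (hW _ _)) (hW _ _)

lemma aux_collapse {Y : Type u} [Fintype Y] (f g : Bool → Y → ℝ)
    (hf : ∀ x, ∑ y, f x y = 1) (hg : ∀ x, ∑ y, g x y = 1) (a : Bool → Bool) :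
    ∑ u : Bool, ∑ y₁ : Y, ∑ y₂ : Y, (1/2) * f (a u) y₁ * g u y₂ = 1 := by
  have h : ∀ u : Bool, ∑ y₁ : Y, ∑ y₂ : Y, (1/2) * f (a u) y₁ * g u y₂ = 1/2 := by
    intro u
    calc ∑ y₁ : Y, ∑ y₂ : Y, (1/2) * f (a u) y₁ * g u y₂
        = (∑ y₁ : Y, (1/2) * f (a u) y₁) * (∑ y₂ : Y, g u y₂) := by
          rw [Finset.sum_mul_sum]
      _ = 1/2 := by rw [hg, ← Finset.mul_sum, hf]; norm_num
  rw [Fintype.sum_bool, h, h]; norm_num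

lemma Wminus_rowsum {Y : Type u} [Fintype Y] (W : Bool → Y → ℝ) (hW : ∀ x, ∑ y, W x y = 1) :
    ∀ x, ∑ y, Wminus W x y = 1 := by
  intro u₁
  have h : ∑ y : Y × Y, Wminus W u₁ y
      = ∑ u₂ : Bool, ∑ y₁ : Y, ∑ y₂ : Y, (1/2) * W (u₁ ^^ u₂) y₁ * W u₂ y₂ := by
    rw [Fintype.sum_prod_type]
    unfold Wminus
    rw [Finset.sum_congr rfl fun y₁ _ => Finset.sum_comm, Finset.sum_comm]
  rw [h]; exact aux_collapse W W hW hW (fun u₂ => u₁ ^^ u₂)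

lemma Wplus_rowsum {Y : Type u} [Fintype Y] (W : Bool → Y → ℝ) (hW : ∀ x, ∑ y, W x y = 1) :
    ∀ x, ∑ y, Wplus W x y = 1 := by
  intro u₂
  have h : ∑ y : Y × Y × Bool, Wplus W u₂ y
      = ∑ u₁ : Bool, ∑ y₁ : Y, ∑ y₂ : Y, (1/2) * W (u₁ ^^ u₂) y₁ * W u₂ y₂ := by
    rw [Fintype.sum_prod_type]
    unfold Wplus
    rw [Finset.sum_congr rfl fun y₁ _ => Fintype.sum_prod_type _]
    rw [Finset.sum_congr rfl fun y₁ _ => Finset.sum_comm, Finset.sum_comm]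
  rw [h]; exact aux_collapse W (fun _ y => W u₂ y) hW (fun _ => hW u₂) (fun u₁ => u₁ ^^ u₂)

lemma polarChan_nonneg : ∀ (s : List Bool) {Y : Type u} (W : Bool → Y → ℝ),
    (∀ x y, 0 ≤ W x y) → ∀ x z, 0 ≤ polarChan W s x z
  | [], _, _, hW => hW
  | true :: s, _, W, hW => polarChan_nonneg s (Wplus W) (Wplus_nonneg W hW)
  | false :: s, _, W, hW => polarChan_nonneg s (Wminus W) (Wminus_nonneg W hW)

lemma polarChan_rowsum : ∀ (s : List Bool) {Y : Type u} [Fintype Y] (W : Bool → Y → ℝ),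
    (∀ x, ∑ y, W x y = 1) → ∀ x, ∑ z, polarChan W s x z = 1
  | [], _, _, _, hW => hW
  | true :: s, _, _, W, hW => polarChan_rowsum s (Wplus W) (Wplus_rowsum W hW)
  | false :: s, _, _, W, hW => polarChan_rowsum s (Wminus W) (Wminus_rowsum W hW)

lemma Ifun_append_true : ∀ (s : List Bool) {Y : Type u} [Fintype Y] (W V : Bool → Y → ℝ),
    Ifun (polarChan W (s ++ [true])) (polarChan V (s ++ [true]))
      = Ifun (Wplus (polarChan W s)) (Wplus (polarChan V s))
  | [], _, _, _, _ => rfl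
  | true :: s, _, _, W, V => Ifun_append_true s (Wplus W) (Wplus V)
  | false :: s, _, _, W, V => Ifun_append_true s (Wminus W) (Wminus V)

lemma Ifun_append_false : ∀ (s : List Bool) {Y : Type u} [Fintype Y] (W V : Bool → Y → ℝ),
    Ifun (polarChan W (s ++ [false])) (polarChan V (s ++ [false]))
      = Ifun (Wminus (polarChan W s)) (Wminus (polarChan V s))
  | [], _, _, _, _ => rfl
  | true :: s, _, _, W, V => Ifun_append_false s (Wplus W) (Wplus V)
  | false :: s, _, _, W, V => Ifun_append_false s (Wminus W) (Wminus V)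

end AuxChan

section AuxMeasure
open MeasureTheory

lemma aux_setIntegral_fintype {α : Type*} [Fintype α] [MeasurableSpace α]
    [MeasurableSingletonClass α] (m : Measure α) [IsFiniteMeasure m] (A : Set α) (f : α → ℝ) :
    ∫ x in A, f x ∂m = ∑ x : α, (m {x}).toReal * Set.indicator A f x := by
  have hA : MeasurableSet A := (Set.to_countable A).measurableSet
  rw [← integral_indicator hA, integral_fintype (Integrable.of_finite)]
  simp [smul_eq_mul, measureReal_def]

lemma aux_pi_mass (n : ℕ) (v : Fin n → Bool) :
    ((Measure.pi fun _ : Fin n => (PMF.uniformOfFintype Bool).toMeasure) {v}).toReal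
      = (1/2 : ℝ) ^ n := by
  rw [← Set.univ_pi_singleton v, Measure.pi_pi]
  have h : ∀ i : Fin n, (PMF.uniformOfFintype Bool).toMeasure {v i} = 2⁻¹ := by
    intro i
    rw [PMF.toMeasure_apply_singleton _ _ (measurableSet_singleton _),
        PMF.uniformOfFintype_apply]
    norm_num
  rw [Finset.prod_congr rfl fun i _ => h i, Finset.prod_const]
  simp [ENNReal.toReal_pow]

end AuxMeasure

open MeasureTheory in
/-- the pair polarization process `Iₙ = I(Wₙ, Vₙ)`, driven by i.i.d.
uniform signs (`true` = plus, `false` = minus) applied simultaneously to both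
channels, is a martingale with respect to its natural filtration. -/
theorem pair_polarization_martingale {Y : Type*} [Fintype Y] (W V : Bool → Y → ℝ)
    (hW0 : ∀ x y, 0 ≤ W x y) (hW1 : ∀ x, ∑ y, W x y = 1)
    (hV0 : ∀ x y, 0 ≤ V x y) (hV1 : ∀ x, ∑ y, V x y = 1)
    (hpos : ∀ (s : List Bool) (x : Bool) (z : polarType Y s),
      0 < polarChan W s x z → 0 < polarChan V s x z)
    (μ : Measure (ℕ → Bool)) [IsProbabilityMeasure μ]
    (hμ : ∀ n : ℕ,
      μ.map (fun ω (i : Fin n) => ω i) =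
        Measure.pi fun _ : Fin n => (PMF.uniformOfFintype Bool).toMeasure)
    (X : ℕ → (ℕ → Bool) → ℝ)
    (hX : ∀ n ω, X n ω =
      Ifun (polarChan W (List.ofFn fun i : Fin n => ω i))
           (polarChan V (List.ofFn fun i : Fin n => ω i)))
    (hXm : ∀ n, StronglyMeasurable (X n)) :
    Martingale X (Filtration.natural X hXm) μ := by
  classical
  -- the one-step martingale identity for the information functional
  have hstep : ∀ s : List Bool,
      Ifun (polarChan W (s ++ [false])) (polarChan V (s ++ [false]))
        + Ifun (polarChan W (s ++ [true])) (polarChan V (s ++ [true]))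
      = 2 * Ifun (polarChan W s) (polarChan V s) := by
    intro s
    rw [Ifun_append_false, Ifun_append_true]
    exact Ifun_step (polarChan W s) (polarChan V s)
      (polarChan_nonneg s W hW0) (polarChan_rowsum s W hW1)
      (polarChan_nonneg s V hV0) (hpos s)
  -- abbreviation for the finite-horizon value function
  set G : (m : ℕ) → (Fin m → Bool) → ℝ :=
    fun m v => Ifun (polarChan W (List.ofFn v)) (polarChan V (List.ofFn v)) with hG
  have hXG : ∀ (m : ℕ) (ω : ℕ → Bool), X m ω = G m (fun i : Fin m => ω i) := fun m ω => hX m ω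
  -- integrability
  have hint : ∀ m, Integrable (X m) μ := by
    intro m
    refine ⟨(hXm m).aestronglyMeasurable,
      HasFiniteIntegral.of_bounded (C := ∑ v : Fin m → Bool, |G m v|)
        (Filter.Eventually.of_forall fun ω => ?_)⟩
    rw [Real.norm_eq_abs, hXG m ω]
    exact Finset.single_le_sum (f := fun v => |G m v|) (fun v _ => abs_nonneg _)
      (Finset.mem_univ _)
  refine martingale_nat (Filtration.stronglyAdapted_natural hXm) hint ?_
  intro n
  have hle : Filtration.natural X hXm n ≤ (inferInstance : MeasurableSpace (ℕ → Bool)) :=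
    (Filtration.natural X hXm).le n
  -- the natural filtration is coarser than the coordinate one
  have hsub : Filtration.natural X hXm n ≤
      MeasurableSpace.comap (fun ω (i : Fin n) => ω i) inferInstance := by
    refine iSup₂_le fun k hk => ?_
    have hXk : X k = (fun v : Fin n → Bool =>
        G k (fun i : Fin k => v (Fin.castLE hk i))) ∘ (fun ω (i : Fin n) => ω i) := by
      funext ω; rw [hXG]; rfl
    rw [hXk, ← MeasurableSpace.comap_comp]
    refine MeasurableSpace.comap_mono ?_
    intro t _
    exact (Set.to_countable t).measurableSet
  refine ae_eq_condExp_of_forall_setIntegral_eq hle (hint (n+1))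
    (fun s _ _ => (hint n).integrableOn) ?_
    ((Filtration.stronglyAdapted_natural hXm n).aestronglyMeasurable)
  intro s hs _
  obtain ⟨t, ht, rfl⟩ := MeasurableSpace.measurableSet_comap.mp (hsub s hs)
  -- measurability facts
  have hπ : ∀ m : ℕ, Measurable (fun ω (i : Fin m) => ω i : (ℕ → Bool) → Fin m → Bool) :=
    fun m => measurable_pi_lambda _ fun i => measurable_pi_apply _
  have hGmeas : ∀ m, Measurable (G m) := fun m => measurable_of_countable _
  have key : ∀ (m : ℕ) (A : Set (Fin m → Bool)),
      MeasurableSet A →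
      ∫ x in (fun ω (i : Fin m) => ω i) ⁻¹' A, X m x ∂μ
        = ∑ v : Fin m → Bool, (1/2 : ℝ) ^ m * Set.indicator A (G m) v := by
    intro m A hA
    have h1 : ∫ x in (fun ω (i : Fin m) => ω i) ⁻¹' A, X m x ∂μ
        = ∫ v in A, G m v ∂(μ.map (fun ω (i : Fin m) => ω i)) := by
      rw [setIntegral_map hA ((hGmeas m).stronglyMeasurable.aestronglyMeasurable)
        (hπ m).aemeasurable]
      exact setIntegral_congr_fun ((hπ m) hA) fun x _ => hXG m x
    rw [h1, hμ m, aux_setIntegral_fintype]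
    exact Finset.sum_congr rfl fun v _ => by rw [aux_pi_mass]
  -- the left-hand side
  rw [key n t ht]
  -- rewrite the set as a preimage under the (n+1)-coordinate map
  have hpre : ((fun ω (i : Fin n) => ω i : (ℕ → Bool) → Fin n → Bool) ⁻¹' t)
      = (fun ω (i : Fin (n+1)) => ω i : (ℕ → Bool) → Fin (n+1) → Bool) ⁻¹'
        ((fun v (i : Fin n) => v i.castSucc : (Fin (n+1) → Bool) → Fin n → Bool) ⁻¹' t) := rfl
  have hres : MeasurableSet ((fun v (i : Fin n) => v i.castSucc) ⁻¹' t :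
      Set (Fin (n+1) → Bool)) := (Set.to_countable _).measurableSet
  rw [hpre, key (n+1) _ hres]
  -- reindex the sum over `Fin (n+1) → Bool` via `Fin.snoc`
  have hbij : Function.Bijective
      (fun p : (Fin n → Bool) × Bool => (Fin.snoc p.1 p.2 : Fin (n+1) → Bool)) := by
    constructor
    · intro p q h
      refine Prod.ext (funext fun i => ?_) ?_
      · have h' := congrFun h i.castSucc
        simp only [Fin.snoc_castSucc] at h'
        exact h'
      · have h' := congrFun h (Fin.last n)
        simp only [Fin.snoc_last] at h'
        exact h'
    · intro v
      refine ⟨(fun i => v i.castSucc, v (Fin.last n)), funext fun i => ?_⟩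
      refine Fin.lastCases ?_ (fun j => ?_) i
      · simp only [Fin.snoc_last]
      · simp only [Fin.snoc_castSucc]
  rw [← Fintype.sum_bijective _ hbij
    (fun p : (Fin n → Bool) × Bool =>
      (1/2 : ℝ) ^ (n+1) *
        Set.indicator ((fun v (i : Fin n) => v i.castSucc) ⁻¹' t) (G (n+1)) (Fin.snoc p.1 p.2))
    _ (fun p => rfl)]
  rw [Fintype.sum_prod_type]
  refine Finset.sum_congr rfl fun w _ => ?_
  -- pointwise identity in `w`
  have hofn : ∀ b : Bool, List.ofFn (Fin.snoc w b : Fin (n+1) → Bool) = List.ofFn w ++ [b] := by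
    intro b
    rw [List.ofFn_succ']
    rw [List.concat_eq_append]
    congr 1
    · exact congrArg List.ofFn (funext fun i => Fin.snoc_castSucc _ _ _)
    · rw [Fin.snoc_last]
  have hmem : ∀ b : Bool, ((Fin.snoc w b : Fin (n+1) → Bool)
      ∈ (fun v (i : Fin n) => v i.castSucc) ⁻¹' t) ↔ w ∈ t := by
    intro b
    have : (fun i : Fin n => (Fin.snoc w b : Fin (n+1) → Bool) i.castSucc) = w :=
      funext fun i => Fin.snoc_castSucc _ _ _
    simp only [Set.mem_preimage, this]
  have hGval : ∀ b : Bool, G (n+1) (Fin.snoc w b)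
      = Ifun (polarChan W (List.ofFn w ++ [b])) (polarChan V (List.ofFn w ++ [b])) := by
    intro b; rw [hG]; simp only; rw [hofn b]
  rw [Fintype.sum_bool]
  by_cases hw : w ∈ t
  · rw [Set.indicator_of_mem ((hmem true).mpr hw), Set.indicator_of_mem ((hmem false).mpr hw),
      Set.indicator_of_mem hw, hGval, hGval]
    have h2 : ((1:ℝ)/2) ^ (n+1) * 2 = (1/2) ^ n := by
      rw [pow_succ]; ring
    have hs := hstep (List.ofFn w)
    rw [hG]
    simp only
    linear_combination (-((1:ℝ)/2)^(n+1)) * hs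
  · rw [Set.indicator_of_notMem (fun h => hw ((hmem true).mp h)),
      Set.indicator_of_notMem (fun h => hw ((hmem false).mp h)),
      Set.indicator_of_notMem hw]
    ring


end
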